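/- Any finite chain {Xₙ, Tₙ}₁ᴺ of sets and maps can be compactified: one can endow each Xₙ with a compact Hausdorff topology so that each map Tₙ : Xₙ → Xₙ₋₁ (n = 2,…,N) is continuous. -/

import Mathlib

open Set OnePoint

namespace ChainCompactAux

attribute [local instance] Classical.propDecidable

variable {X : ℕ → Type*}

/-- `R T k n` is the range in `X n` of the composite map from `X (n + k)`. -/
def R (T : ∀ n : ℕ, X (n + 1) → X n) : ℕ → ∀ n, Set (X n)
  | 0 => fun _ => Set.univ
  | k + 1 => fun n => T n '' R T k (n + 1)

lemma R_succ_subset (T : ∀ n : ℕ, X (n + 1) → X n) (k n : ℕ) :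
    R T (k + 1) n ⊆ R T k n := by
  induction k generalizing n with
  | zero => intro x _; exact Set.mem_univ x
  | succ k ih => exact Set.image_mono (ih (n + 1))

lemma R_mono (T : ∀ n : ℕ, X (n + 1) → X n) {k k' : ℕ} (h : k ≤ k') (n : ℕ) :
    R T k' n ⊆ R T k n := by
  induction h with
  | refl => exact fun x hx => hx
  | step _ ih => exact fun x hx => ih (R_succ_subset T _ n hx)

section Step

variable (T : ∀ n : ℕ, X (n + 1) → X n) (N n : ℕ)

/-- the largest admissible depth `k` such that `y` is in the range from `X (n+1+k)`. -/
noncomputable def mdeg (y : X n) : ℕ :=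
  Nat.findGreatest (fun k => n + 1 + k ≤ N ∧ y ∈ R T (k + 1) n) N

lemma mem_R_mdeg (hn : n + 1 ≤ N) {y : X n} (hy : y ∈ R T 1 n) :
    y ∈ R T (mdeg T N n y + 1) n := by
  have h := Nat.findGreatest_spec (P := fun k => n + 1 + k ≤ N ∧ y ∈ R T (k + 1) n)
    (Nat.zero_le N) ⟨by omega, hy⟩
  exact h.2

lemma mdeg_ge {k : ℕ} (hk : n + 1 + k ≤ N) {y : X n} (hyk : y ∈ R T (k + 1) n) :
    k ≤ mdeg T N n y :=
  Nat.le_findGreatest (by omega) ⟨hk, hyk⟩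

/-- a designated point in each fiber of `T n`, chosen as deep in the ranges as possible. -/
noncomputable def sec (hn : n + 1 ≤ N) (y : X n) (hy : y ∈ R T 1 n) : X (n + 1) :=
  (mem_R_mdeg T N n hn hy).choose

lemma sec_mem (hn : n + 1 ≤ N) (y : X n) (hy : y ∈ R T 1 n) :
    sec T N n hn y hy ∈ R T (mdeg T N n y) (n + 1) :=
  (mem_R_mdeg T N n hn hy).choose_spec.1

lemma sec_map (hn : n + 1 ≤ N) (y : X n) (hy : y ∈ R T 1 n) :
    T n (sec T N n hn y hy) = y :=
  (mem_R_mdeg T N n hn hy).choose_spec.2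

lemma sec_congr (hn : n + 1 ≤ N) {y y' : X n} (h : y = y')
    (hy : y ∈ R T 1 n) (hy' : y' ∈ R T 1 n) :
    sec T N n hn y hy = sec T N n hn y' hy' := by subst h; rfl

lemma sec_mem_of (hn : n + 1 ≤ N) {k : ℕ} (hk : n + 1 + k ≤ N) {y : X n}
    (hy : y ∈ R T 1 n) (hyk : y ∈ R T (k + 1) n) :
    sec T N n hn y hy ∈ R T k (n + 1) :=
  R_mono T (mdeg_ge T N n hk hyk) (n + 1) (sec_mem T N n hn y hy)

/-- `x` is the designated point of its fiber. -/
def desig (hn : n + 1 ≤ N) (x : X (n + 1)) : Prop :=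
  x = sec T N n hn (T n x) ⟨x, Set.mem_univ x, rfl⟩

/-- the embedding of `X (n+1)` used to define its topology. -/
noncomputable def psi (hn : n + 1 ≤ N) (x : X (n + 1)) : X n × OnePoint (X (n + 1)) :=
  (T n x, if desig T N n hn x then ∞ else (x : OnePoint (X (n + 1))))

lemma psi_fst (hn : n + 1 ≤ N) (x : X (n + 1)) : (psi T N n hn x).1 = T n x := rfl

lemma psi_inj (hn : n + 1 ≤ N) : Function.Injective (psi T N n hn) := by
  intro x x' h
  have h1 : T n x = T n x' := congrArg Prod.fst h
  have h2 : (psi T N n hn x).2 = (psi T N n hn x').2 := congrArg Prod.snd h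
  by_cases dx : desig T N n hn x <;> by_cases dx' : desig T N n hn x'
  · exact dx.trans ((sec_congr T N n hn h1 _ _).trans dx'.symm)
  · simp only [psi, if_pos dx, if_neg dx'] at h2
    exact absurd h2 (OnePoint.infty_ne_coe x')
  · simp only [psi, if_neg dx, if_pos dx'] at h2
    exact absurd h2 (OnePoint.coe_ne_infty x)
  · simp only [psi, if_neg dx, if_neg dx'] at h2
    exact OnePoint.coe_injective h2

/-- explicit description of the image of `R T k (n+1)` under `psi`. -/
def Sset (hn : n + 1 ≤ N) (k : ℕ) : Set (X n × OnePoint (X (n + 1))) :=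
  {p | (p.2 = ∞ ∧ p.1 ∈ R T (k + 1) n) ∨
    ∃ x, ¬ desig T N n hn x ∧ x ∈ R T k (n + 1) ∧
      p = (T n x, (x : OnePoint (X (n + 1))))}

lemma image_psi (hn : n + 1 ≤ N) (k : ℕ) (hk : n + 1 + k ≤ N) :
    psi T N n hn '' (R T k (n + 1)) = Sset T N n hn k := by
  ext p
  constructor
  · rintro ⟨x, hx, rfl⟩
    by_cases dx : desig T N n hn x
    · exact Or.inl ⟨by simp [psi, if_pos dx], ⟨x, hx, rfl⟩⟩
    · exact Or.inr ⟨x, dx, hx, by simp [psi, if_neg dx]⟩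
  · rintro (⟨h1, h2⟩ | ⟨x, dx, hx, rfl⟩)
    · obtain ⟨y, z⟩ := p
      simp only at h1 h2
      subst h1
      have hy1 : y ∈ R T 1 n := R_mono T (by omega) n h2
      refine ⟨sec T N n hn y hy1, sec_mem_of T N n hn hk hy1 h2, ?_⟩
      have hmap : T n (sec T N n hn y hy1) = y := sec_map T N n hn y hy1
      have hdes : desig T N n hn (sec T N n hn y hy1) :=
        (sec_congr T N n hn hmap.symm hy1 _)
      simp only [psi, if_pos hdes, hmap]
    · exact ⟨x, hx, by simp [psi, if_neg dx]⟩

lemma preimage_psi (hn : n + 1 ≤ N) (k : ℕ) (hk : n + 1 + k ≤ N) :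
    R T k (n + 1) = psi T N n hn ⁻¹' Sset T N n hn k := by
  ext x
  constructor
  · intro hx
    rw [← image_psi T N n hn k hk]
    exact Set.mem_image_of_mem _ hx
  · rintro (⟨h1, h2⟩ | ⟨x', dx', hx', heq⟩)
    · by_cases dx : desig T N n hn x
      · rw [psi_fst] at h2
        have hm := sec_mem_of T N n hn hk (⟨x, Set.mem_univ x, rfl⟩ :
          T n x ∈ R T 1 n) h2
        rwa [← dx] at hm
      · exfalso
        simp only [psi, if_neg dx] at h1
        exact OnePoint.coe_ne_infty x h1
    · have h2 : (psi T N n hn x).2 = (x' : OnePoint (X (n + 1))) := by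
        rw [heq]
      by_cases dx : desig T N n hn x
      · simp only [psi, if_pos dx] at h2
        exact absurd h2 (OnePoint.infty_ne_coe x')
      · simp only [psi, if_neg dx] at h2
        rw [OnePoint.coe_injective h2]
        exact hx'

/-- the (discrete-based) one-point compactification topology. -/
noncomputable def tOP (α : Type*) : TopologicalSpace (OnePoint α) :=
  letI : TopologicalSpace α := ⊥
  inferInstance

lemma tOP_compact (α : Type*) : @CompactSpace (OnePoint α) (tOP α) := by
  letI : TopologicalSpace α := ⊥
  exact (inferInstance : CompactSpace (OnePoint α))

lemma tOP_t2 (α : Type*) : @T2Space (OnePoint α) (tOP α) := by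
  letI : TopologicalSpace α := ⊥
  haveI : DiscreteTopology α := ⟨rfl⟩
  exact (inferInstance : T2Space (OnePoint α))

lemma tOP_isOpen_singleton (α : Type*) (x : α) :
    @IsOpen _ (tOP α) {(x : OnePoint α)} := by
  letI : TopologicalSpace α := ⊥
  haveI : DiscreteTopology α := ⟨rfl⟩
  rw [← Set.image_singleton]
  exact OnePoint.isOpenEmbedding_coe.isOpenMap _ (isOpen_discrete _)

variable (tn : TopologicalSpace (X n))

/-- the product topology on the codomain of `psi`. -/
noncomputable def tProd : TopologicalSpace (X n × OnePoint (X (n + 1))) :=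
  @instTopologicalSpaceProd _ _ tn (tOP (X (n + 1)))

lemma Sset_closed (hn : n + 1 ≤ N) (k : ℕ) (h2 : @T2Space _ tn)
    (hcl : @IsClosed _ tn (R T (k + 1) n)) :
    @IsClosed _ (tProd (X := X) n tn) (Sset T N n hn k) := by
  letI := tn
  letI : TopologicalSpace (OnePoint (X (n + 1))) := tOP (X (n + 1))
  haveI := h2
  show IsClosed (Sset T N n hn k)
  rw [← isOpen_compl_iff, isOpen_iff_forall_mem_open]
  rintro ⟨y, z⟩ hp
  induction z using OnePoint.rec with
  | infty =>
    have hy : y ∉ R T (k + 1) n := fun h => hp (Or.inl ⟨rfl, h⟩)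
    refine ⟨(R T (k + 1) n)ᶜ ×ˢ Set.univ, ?_, hcl.isOpen_compl.prod isOpen_univ, ⟨hy, trivial⟩⟩
    rintro ⟨y', z'⟩ ⟨hy', -⟩ hS
    rcases hS with ⟨-, hmem⟩ | ⟨x, -, hx, heq⟩
    · exact hy' hmem
    · apply hy'
      have : y' = T n x := congrArg Prod.fst heq
      rw [this]
      exact ⟨x, hx, rfl⟩
  | coe x =>
    by_cases hcase : ¬ desig T N n hn x ∧ x ∈ R T k (n + 1)
    · have hy : y ≠ T n x := by
        rintro rfl
        exact hp (Or.inr ⟨x, hcase.1, hcase.2, rfl⟩)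
      refine ⟨{T n x}ᶜ ×ˢ {(x : OnePoint (X (n + 1)))}, ?_,
        (isClosed_singleton.isOpen_compl).prod (tOP_isOpen_singleton _ x), ⟨hy, rfl⟩⟩
      rintro ⟨y', z'⟩ ⟨hy', hz'⟩ hS
      rcases hS with ⟨h1, -⟩ | ⟨x', -, -, heq⟩
      · rw [Set.mem_singleton_iff] at hz'
        exact OnePoint.coe_ne_infty x (hz'.symm.trans h1)
      · rw [Set.mem_singleton_iff] at hz'
        have e2 : z' = (x' : OnePoint (X (n + 1))) := congrArg Prod.snd heq
        have ex : x' = x := OnePoint.coe_injective (e2.symm.trans hz')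
        have e1 : y' = T n x' := congrArg Prod.fst heq
        exact hy' (by rw [e1, ex]; rfl)
    · refine ⟨Set.univ ×ˢ {(x : OnePoint (X (n + 1)))}, ?_,
        isOpen_univ.prod (tOP_isOpen_singleton _ x), ⟨trivial, rfl⟩⟩
      rintro ⟨y', z'⟩ ⟨-, hz'⟩ hS
      rcases hS with ⟨h1, -⟩ | ⟨x', dx', hx', heq⟩
      · rw [Set.mem_singleton_iff] at hz'
        exact OnePoint.coe_ne_infty x (hz'.symm.trans h1)
      · rw [Set.mem_singleton_iff] at hz'
        have e2 : z' = (x' : OnePoint (X (n + 1))) := congrArg Prod.snd heq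
        have ex : x' = x := OnePoint.coe_injective (e2.symm.trans hz')
        rw [ex] at dx' hx'
        exact hcase ⟨dx', hx'⟩

/-- the new topology on `X (n+1)`. -/
noncomputable def tNew (hn : n + 1 ≤ N) : TopologicalSpace (X (n + 1)) :=
  TopologicalSpace.induced (psi T N n hn) (tProd (X := X) n tn)

lemma psi_cont (hn : n + 1 ≤ N) :
    @Continuous _ _ (tNew T N n tn hn) (tProd (X := X) n tn) (psi T N n hn) :=
  continuous_induced_dom

lemma psi_embedding (hn : n + 1 ≤ N) :
    @Topology.IsEmbedding _ _ (tNew T N n tn hn) (tProd (X := X) n tn) (psi T N n hn) := by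
  letI := tNew T N n tn hn
  letI := tProd (X := X) n tn
  exact ⟨⟨rfl⟩, psi_inj T N n hn⟩

lemma tNew_t2 (hn : n + 1 ≤ N) (h2 : @T2Space _ tn) :
    @T2Space _ (tNew T N n tn hn) := by
  letI := tn
  letI : TopologicalSpace (OnePoint (X (n + 1))) := tOP (X (n + 1))
  haveI := h2
  haveI : T2Space (OnePoint (X (n + 1))) := tOP_t2 (X (n + 1))
  haveI : T2Space (X n × OnePoint (X (n + 1))) := inferInstance
  exact @Topology.IsEmbedding.t2Space _ _ (tNew T N n tn hn) _ ‹T2Space (X n × OnePoint (X (n + 1)))› _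
    (psi_embedding T N n tn hn)

lemma tNew_compact (hn : n + 1 ≤ N) (hcpt : @CompactSpace _ tn) (h2 : @T2Space _ tn)
    (hcl1 : @IsClosed _ tn (R T 1 n)) :
    @CompactSpace _ (tNew T N n tn hn) := by
  letI := tn
  letI : TopologicalSpace (OnePoint (X (n + 1))) := tOP (X (n + 1))
  haveI := hcpt
  haveI : CompactSpace (OnePoint (X (n + 1))) := tOP_compact (X (n + 1))
  haveI : CompactSpace (X n × OnePoint (X (n + 1))) := inferInstance
  have hrange : Set.range (psi T N n hn) = Sset T N n hn 0 := by
    rw [← Set.image_univ]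
    exact image_psi T N n hn 0 (by omega)
  have hclosed : IsClosed (Set.range (psi T N n hn)) := by
    rw [hrange]
    exact Sset_closed T N n tn hn 0 h2 hcl1
  letI := tNew T N n tn hn
  have hce : Topology.IsClosedEmbedding (psi T N n hn) :=
    ⟨psi_embedding T N n tn hn, hclosed⟩
  exact hce.compactSpace

lemma tNew_closed_R (hn : n + 1 ≤ N) (h2 : @T2Space _ tn) (k : ℕ) (hk : n + 1 + k ≤ N)
    (hcl : @IsClosed _ tn (R T (k + 1) n)) :
    @IsClosed _ (tNew T N n tn hn) (R T k (n + 1)) := by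
  letI := tn
  letI : TopologicalSpace (OnePoint (X (n + 1))) := tOP (X (n + 1))
  letI := tNew T N n tn hn
  rw [preimage_psi T N n hn k hk]
  exact (Sset_closed T N n tn hn k h2 hcl).preimage (psi_cont T N n tn hn)

lemma tNew_cont (hn : n + 1 ≤ N) :
    @Continuous _ _ (tNew T N n tn hn) tn (T n) := by
  have : @Continuous _ _ (tNew T N n tn hn) tn (fun x => (psi T N n hn x).1) :=
    @Continuous.comp _ _ _ (tNew T N n tn hn) (tProd (X := X) n tn) tn _ _
      (@continuous_fst _ _ tn (tOP (X (n + 1)))) (psi_cont T N n tn hn)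
  exact this

end Step

section Base

variable (T : ∀ n : ℕ, X (n + 1) → X n) (N : ℕ)

noncomputable def rnk (x : X 0) : ℕ :=
  Nat.findGreatest (fun k => x ∈ R T k 0) N

lemma rnk_le (x : X 0) : rnk T N x ≤ N := Nat.findGreatest_le N

lemma rnk_mem (x : X 0) : x ∈ R T (rnk T N x) 0 :=
  Nat.findGreatest_spec (P := fun k => x ∈ R T k 0) (Nat.zero_le N) (Set.mem_univ x)

lemma rnk_ge {k : ℕ} (hk : k ≤ N) {x : X 0} (h : x ∈ R T k 0) : k ≤ rnk T N x :=
  Nat.le_findGreatest hk h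

lemma mem_iff_rnk {k : ℕ} (hk : k ≤ N) (x : X 0) :
    x ∈ R T k 0 ↔ k ≤ rnk T N x :=
  ⟨rnk_ge T N hk, fun h => R_mono T h 0 (rnk_mem T N x)⟩

noncomputable def pickr (r : ℕ) (h : ∃ x : X 0, rnk T N x = r) : X 0 := h.choose

lemma pickr_rnk (r : ℕ) (h : ∃ x : X 0, rnk T N x = r) :
    rnk T N (pickr T N r h) = r := h.choose_spec

lemma pickr_congr {r r' : ℕ} (h : r = r') (hr : ∃ x : X 0, rnk T N x = r)
    (hr' : ∃ x : X 0, rnk T N x = r') : pickr T N r hr = pickr T N r' hr' := by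
  subst h; rfl

def desig0 (x : X 0) : Prop := x = pickr T N (rnk T N x) ⟨x, rfl⟩

noncomputable def phi (x : X 0) : OnePoint (X 0) × Fin (N + 1) :=
  (if desig0 T N x then ∞ else (x : OnePoint (X 0)),
    ⟨rnk T N x, Nat.lt_succ_of_le (rnk_le T N x)⟩)

lemma phi_inj : Function.Injective (phi T N) := by
  intro x x' h
  have h2 : rnk T N x = rnk T N x' :=
    congrArg Fin.val (congrArg Prod.snd h)
  have h1 := congrArg Prod.fst h
  by_cases dx : desig0 T N x <;> by_cases dx' : desig0 T N x'
  · exact dx.trans ((pickr_congr T N h2 _ _).trans dx'.symm)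
  · simp only [phi, if_pos dx, if_neg dx'] at h1
    exact absurd h1 (OnePoint.infty_ne_coe x')
  · simp only [phi, if_neg dx, if_pos dx'] at h1
    exact absurd h1 (OnePoint.coe_ne_infty x)
  · simp only [phi, if_neg dx, if_neg dx'] at h1
    exact OnePoint.coe_injective h1

def Image0 : Set (OnePoint (X 0) × Fin (N + 1)) :=
  {p | (p.1 = ∞ ∧ ∃ x : X 0, rnk T N x = p.2.val) ∨
    ∃ x : X 0, ¬ desig0 T N x ∧
      p = ((x : OnePoint (X 0)), ⟨rnk T N x, Nat.lt_succ_of_le (rnk_le T N x)⟩)}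

lemma range_phi : Set.range (phi T N) = Image0 T N := by
  ext p
  constructor
  · rintro ⟨x, rfl⟩
    by_cases dx : desig0 T N x
    · exact Or.inl ⟨by simp [phi, if_pos dx], ⟨x, rfl⟩⟩
    · exact Or.inr ⟨x, dx, by simp [phi, if_neg dx]⟩
  · rintro (⟨h1, x, hx⟩ | ⟨x, dx, rfl⟩)
    · obtain ⟨z, r⟩ := p
      simp only at h1 hx
      subst h1
      refine ⟨pickr T N r.val ⟨x, hx⟩, ?_⟩
      have hr : rnk T N (pickr T N r.val ⟨x, hx⟩) = r.val := pickr_rnk T N r.val ⟨x, hx⟩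
      have hdes : desig0 T N (pickr T N r.val ⟨x, hx⟩) :=
        (pickr_congr T N hr.symm _ _)
      simp only [phi, if_pos hdes]
      exact Prod.ext rfl (Fin.ext hr)
    · exact ⟨x, by simp [phi, if_neg dx]⟩

noncomputable def tFin : TopologicalSpace (Fin (N + 1)) := ⊥

/-- the base topology on `X 0`. -/
noncomputable def tBase : TopologicalSpace (X 0) :=
  TopologicalSpace.induced (phi T N)
    (@instTopologicalSpaceProd _ _ (tOP (X 0)) (tFin N))

lemma phi_embedding : @Topology.IsEmbedding _ _ (tBase T N)
    (@instTopologicalSpaceProd _ _ (tOP (X 0)) (tFin N)) (phi T N) := by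
  letI := tBase T N
  letI := @instTopologicalSpaceProd _ _ (tOP (X 0)) (tFin N)
  exact ⟨⟨rfl⟩, phi_inj T N⟩

lemma Image0_closed :
    @IsClosed _ (@instTopologicalSpaceProd _ _ (tOP (X 0)) (tFin N)) (Image0 T N) := by
  letI : TopologicalSpace (OnePoint (X 0)) := tOP (X 0)
  letI : TopologicalSpace (Fin (N + 1)) := tFin N
  haveI : DiscreteTopology (Fin (N + 1)) := ⟨rfl⟩
  show IsClosed (Image0 T N)
  rw [← isOpen_compl_iff, isOpen_iff_forall_mem_open]
  rintro ⟨z, r⟩ hp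
  induction z using OnePoint.rec with
  | infty =>
    have hr : ¬ ∃ x : X 0, rnk T N x = r.val := fun h => hp (Or.inl ⟨rfl, h⟩)
    refine ⟨Set.univ ×ˢ {r}, ?_, isOpen_univ.prod (isOpen_discrete _), ⟨trivial, rfl⟩⟩
    rintro ⟨z', r'⟩ ⟨-, hr'⟩ hS
    rw [Set.mem_singleton_iff] at hr'
    rcases hS with ⟨-, x, hx⟩ | ⟨x, -, heq⟩
    · exact hr ⟨x, by rw [← hr']; exact hx⟩
    · apply hr
      have e2 : r' = ⟨rnk T N x, Nat.lt_succ_of_le (rnk_le T N x)⟩ :=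
        congrArg Prod.snd heq
      exact ⟨x, by rw [← hr', e2]⟩
  | coe x =>
    by_cases dx : desig0 T N x
    · refine ⟨{(x : OnePoint (X 0))} ×ˢ Set.univ, ?_,
        (tOP_isOpen_singleton _ x).prod isOpen_univ, ⟨rfl, trivial⟩⟩
      rintro ⟨z', r'⟩ ⟨hz', -⟩ hS
      rw [Set.mem_singleton_iff] at hz'
      rcases hS with ⟨h1, -⟩ | ⟨x', dx', heq⟩
      · exact OnePoint.coe_ne_infty x (hz'.symm.trans h1)
      · have e1 : z' = (x' : OnePoint (X 0)) := congrArg Prod.fst heq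
        have ex : x' = x := OnePoint.coe_injective (e1.symm.trans hz')
        rw [ex] at dx'
        exact dx' dx
    · have hr : r ≠ ⟨rnk T N x, Nat.lt_succ_of_le (rnk_le T N x)⟩ := by
        rintro rfl
        exact hp (Or.inr ⟨x, dx, rfl⟩)
      refine ⟨{(x : OnePoint (X 0))} ×ˢ {r}, ?_,
        (tOP_isOpen_singleton _ x).prod (isOpen_discrete _), ⟨rfl, rfl⟩⟩
      rintro ⟨z', r'⟩ ⟨hz', hr'⟩ hS
      rw [Set.mem_singleton_iff] at hz' hr'
      rcases hS with ⟨h1, -⟩ | ⟨x', -, heq⟩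
      · exact OnePoint.coe_ne_infty x (hz'.symm.trans h1)
      · have e1 : z' = (x' : OnePoint (X 0)) := congrArg Prod.fst heq
        have ex : x' = x := OnePoint.coe_injective (e1.symm.trans hz')
        have e2 : r' = ⟨rnk T N x', Nat.lt_succ_of_le (rnk_le T N x')⟩ :=
          congrArg Prod.snd heq
        apply hr
        rw [← hr', e2, ex]
  
lemma tBase_t2 : @T2Space _ (tBase T N) := by
  letI : TopologicalSpace (OnePoint (X 0)) := tOP (X 0)
  letI : TopologicalSpace (Fin (N + 1)) := tFin N
  haveI : DiscreteTopology (Fin (N + 1)) := ⟨rfl⟩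
  haveI : T2Space (OnePoint (X 0)) := tOP_t2 (X 0)
  haveI : T2Space (OnePoint (X 0) × Fin (N + 1)) := inferInstance
  exact @Topology.IsEmbedding.t2Space _ _ (tBase T N) _ _ _ (phi_embedding T N)

lemma tBase_compact : @CompactSpace _ (tBase T N) := by
  letI : TopologicalSpace (OnePoint (X 0)) := tOP (X 0)
  letI : TopologicalSpace (Fin (N + 1)) := tFin N
  haveI : CompactSpace (OnePoint (X 0)) := tOP_compact (X 0)
  haveI : CompactSpace (OnePoint (X 0) × Fin (N + 1)) := inferInstance
  have hclosed : IsClosed (Set.range (phi T N)) := by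
    rw [range_phi]
    exact Image0_closed T N
  letI := tBase T N
  have hce : Topology.IsClosedEmbedding (phi T N) :=
    ⟨phi_embedding T N, hclosed⟩
  exact hce.compactSpace

lemma tBase_closed_R (k : ℕ) (hk : k ≤ N) :
    @IsClosed _ (tBase T N) (R T k 0) := by
  have hpre : R T k 0 = phi T N ⁻¹'
      (Set.univ ×ˢ {r : Fin (N + 1) | k ≤ r.val}) := by
    ext x
    simp only [Set.mem_preimage, Set.mem_prod, Set.mem_univ, true_and, Set.mem_setOf_eq]
    exact (mem_iff_rnk T N hk x).trans Iff.rfl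
  letI : TopologicalSpace (OnePoint (X 0)) := tOP (X 0)
  letI : TopologicalSpace (Fin (N + 1)) := tFin N
  letI := tBase T N
  haveI : DiscreteTopology (Fin (N + 1)) := ⟨rfl⟩
  rw [hpre]
  have hcl2 : IsClosed ((Set.univ : Set (OnePoint (X 0))) ×ˢ {r : Fin (N + 1) | k ≤ r.val}) :=
    isClosed_univ.prod (isClosed_discrete _)
  exact hcl2.preimage continuous_induced_dom

end Base

section Assemble

variable (T : ∀ n : ℕ, X (n + 1) → X n) (N : ℕ)

structure Pack (n : ℕ) where
  t : TopologicalSpace (X n)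
  cpt : @CompactSpace (X n) t
  t2 : @T2Space (X n) t
  cl : ∀ k : ℕ, n + k ≤ N → @IsClosed (X n) t (R T k n)

noncomputable def basePack : Pack T N 0 where
  t := tBase T N
  cpt := tBase_compact T N
  t2 := tBase_t2 T N
  cl := fun k hk => tBase_closed_R T N k (by omega)

noncomputable def stepPack (n : ℕ) (hn : n + 1 ≤ N) (p : Pack T N n) : Pack T N (n + 1) where
  t := tNew T N n p.t hn
  cpt := tNew_compact T N n p.t hn p.cpt p.t2 (p.cl 1 (by omega))
  t2 := tNew_t2 T N n p.t hn p.t2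
  cl := fun k hk => tNew_closed_R T N n p.t hn p.t2 k (by omega)
    (p.cl (k + 1) (by omega))

lemma stepPack_cont (n : ℕ) (hn : n + 1 ≤ N) (p : Pack T N n) :
    @Continuous _ _ (stepPack T N n hn p).t p.t (T n) :=
  tNew_cont T N n p.t hn

noncomputable def packs : ∀ n : ℕ, n ≤ N → Pack T N n :=
  Nat.rec (motive := fun n => n ≤ N → Pack T N n)
    (fun _ => basePack T N)
    (fun n ih h => stepPack T N n h (ih (Nat.le_of_succ_le h)))

end Assemble

end ChainCompactAux

/-- Any finite chain of sets and maps can be compactified: here `X n` for `n ≤ N` play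
the role of `X₁, …, X_N` and `T n : X (n+1) → X n` the connecting maps. -/
theorem chain_compactification (N : ℕ) (X : ℕ → Type*) (T : ∀ n : ℕ, X (n + 1) → X n) :
    ∃ t : ∀ n : ℕ, TopologicalSpace (X n),
      (∀ n ≤ N, @CompactSpace (X n) (t n) ∧ @T2Space (X n) (t n)) ∧
      (∀ n < N, @Continuous (X (n + 1)) (X n) (t (n + 1)) (t n) (T n)) := by
  classical
  refine ⟨fun n => if h : n ≤ N then (ChainCompactAux.packs T N n h).t else ⊥,
    fun n hn => ?_, fun n hn => ?_⟩
  · beta_reduce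
    rw [dif_pos hn]
    exact ⟨(ChainCompactAux.packs T N n hn).cpt, (ChainCompactAux.packs T N n hn).t2⟩
  · have h1 : n + 1 ≤ N := hn
    have h0 : n ≤ N := Nat.le_of_succ_le h1
    beta_reduce
    rw [dif_pos h1, dif_pos h0]
    exact ChainCompactAux.stepPack_cont T N n h1 (ChainCompactAux.packs T N n h0)
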